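/- arXiv:2303.04762 — 5 statements merged into one kernel-verified Lean document; each statement's English description precedes it below -/
import Mathlib

section
/- In the integral sum graph G_{r,s} on vertex set {r,...,0,...,s} with r < 0 < s and n = |r|+s+1 vertices, a negative vertex labeled -i (so i > 0) satisfies: deg(-i) = n - i - 1 if 1 ≤ i ≤ ⌊|r|/2⌋, and deg(-i) = n - i if ⌊|r|/2⌋ < i ≤ |r|. -/
/-- The integral sum graph on vertex set `{r, ..., s} ⊆ ℤ`:
distinct `u, v` are adjacent iff `u + v` also lies in `{r, ..., s}`. -/
def intervalSumGraph (r s : ℤ) : SimpleGraph ℤ where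
  Adj u v := u ≠ v ∧ u ∈ Set.Icc r s ∧ v ∈ Set.Icc r s ∧ u + v ∈ Set.Icc r s
  symm := by
    constructor
    rintro u v ⟨h1, h2, h3, h4⟩
    exact ⟨h1.symm, h3, h2, by rwa [add_comm]⟩
  loopless := ⟨fun u h => h.1 rfl⟩

/-- The graph `H^{-i,s}_{m,j}`: obtained from the integral sum graph `G_{-i,s}`
by deleting the vertices `-m` and `j` and all edges whose endpoint labels sum
to `-m` or to `j`. -/
def HGraph (i s m j : ℤ) : SimpleGraph ℤ where
  Adj u v := u ≠ v ∧ u ∈ Set.Icc (-i) s ∧ v ∈ Set.Icc (-i) s ∧ u + v ∈ Set.Icc (-i) s ∧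
    u ≠ -m ∧ v ≠ -m ∧ u ≠ j ∧ v ≠ j ∧ u + v ≠ -m ∧ u + v ≠ j
  symm := by
    constructor
    rintro u v ⟨h1, h2, h3, h4, h5, h6, h7, h8, h9, h10⟩
    exact ⟨h1.symm, h3, h2, by rwa [add_comm], h6, h5, h8, h7,
      by rwa [add_comm], by rwa [add_comm]⟩
  loopless := ⟨fun u h => h.1 rfl⟩

/-- The chromatic index of a graph: the least `n` such that there is a proper
edge coloring with `n` colors (distinct edges sharing a vertex get distinct colors). -/
noncomputable def chromaticIndex {V : Type*} (G : SimpleGraph V) : ℕ :=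
  sInf {n : ℕ | ∃ c : Sym2 V → Fin n,
    ∀ e ∈ G.edgeSet, ∀ f ∈ G.edgeSet, e ≠ f → (∃ v, v ∈ e ∧ v ∈ f) → c e ≠ c f}

/-- The sum of the two endpoint labels of an edge. -/
def edgeSum (e : Sym2 ℤ) : ℤ := Sym2.lift ⟨fun a b => a + b, fun a b => add_comm a b⟩ e

/-- The edge-sum chromatic number: the number of nonempty edge-sum color classes. -/
noncomputable def edgeSumChromatic (G : SimpleGraph ℤ) : ℕ :=
  {k : ℤ | ∃ e ∈ G.edgeSet, edgeSum e = k}.ncard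


lemma neigh_eq (r s i : ℤ) (hr : r < 0) (hs : 0 < s) (h1 : 1 ≤ i) (h2 : i ≤ -r) :
    (intervalSumGraph r s).neighborSet (-i) = Set.Icc (r + i) s \ {-i} := by
  ext v
  simp only [SimpleGraph.mem_neighborSet, intervalSumGraph, Set.mem_Icc, Set.mem_diff,
    Set.mem_singleton_iff]
  constructor
  · rintro ⟨hne, _, ⟨hv1, hv2⟩, ⟨hw1, hw2⟩⟩
    exact ⟨⟨by linarith, hv2⟩, fun h => hne h.symm⟩
  · rintro ⟨⟨hv1, hv2⟩, hne⟩
    exact ⟨fun h => hne h.symm, ⟨by linarith, by linarith⟩, ⟨by linarith, hv2⟩,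
      ⟨by linarith, by linarith⟩⟩

lemma icc_ncard (a b : ℤ) : (Set.Icc a b).ncard = (b + 1 - a).toNat := by
  rw [← Finset.coe_Icc, Set.ncard_coe_finset, Int.card_Icc]

theorem degree_neg (r s i : ℤ) (hr : r < 0) (hs : 0 < s) :
    (1 ≤ i → i ≤ |r| / 2 →
      (((intervalSumGraph r s).neighborSet (-i)).ncard : ℤ) = (|r| + s + 1) - i - 1) ∧
    (|r| / 2 < i → i ≤ |r| →
      (((intervalSumGraph r s).neighborSet (-i)).ncard : ℤ) = (|r| + s + 1) - i) := by
  have habs : |r| = -r := abs_of_neg hr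
  rw [habs]
  constructor
  · intro h1 h2
    have h2' : i * 2 ≤ -r := (Int.le_ediv_iff_mul_le (by norm_num)).mp h2
    rw [neigh_eq r s i hr hs h1 (by linarith)]
    have hmem : -i ∈ Set.Icc (r + i) s := by
      constructor <;> [linarith; linarith]
    rw [Set.ncard_diff_singleton_of_mem hmem]
    rw [icc_ncard]
    have hnn : (0:ℤ) ≤ s + 1 - (r + i) := by linarith
    have : ((s + 1 - (r + i)).toNat : ℤ) = s + 1 - (r + i) := Int.toNat_of_nonneg hnn
    have hge : 1 ≤ (s + 1 - (r + i)).toNat := by omega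
    push_cast [Nat.cast_sub hge]
    omega
  · intro h2 h3
    have h2' : -r < i * 2 := by
      by_contra hc
      push_neg at hc
      exact absurd ((Int.le_ediv_iff_mul_le (by norm_num)).mpr hc) (not_le.mpr h2)
    have h1 : 1 ≤ i := by
      rcases lt_or_ge i 1 with h | h
      · exfalso; have : -r / 2 ≥ 0 := Int.ediv_nonneg (by linarith) (by norm_num); omega
      · exact h
    rw [neigh_eq r s i hr hs h1 h3]
    have hnot : -i ∉ Set.Icc (r + i) s := by
      intro hm
      have := hm.1
      linarith
    rw [Set.diff_singleton_eq_self hnot, icc_ncard]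
    omega
end

section
/- For every s with 3 ≤ s ≤ 6, the chromatic index of H^{-2,s}_{1,1} equals s. -/
lemma HGraph_adj (i S m j u v : ℤ) :
    (HGraph i S m j).Adj u v ↔ u ≠ v ∧ (-i ≤ u ∧ u ≤ S) ∧ (-i ≤ v ∧ v ≤ S) ∧
      (-i ≤ u+v ∧ u+v ≤ S) ∧ u ≠ -m ∧ v ≠ -m ∧ u ≠ j ∧ v ≠ j ∧ u+v ≠ -m ∧ u+v ≠ j := by
  simp [HGraph, Set.mem_Icc]

/-- modified edge sum used for the coloring -/
noncomputable def msum (S : ℤ) (e : Sym2 ℤ) : ℤ :=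
  if e = s((-2:ℤ), 0) then S else if e = s((0:ℤ), S) then 0 else edgeSum e

lemma mrange (S m a b : ℤ) (h3 : 3 ≤ S) (hab : a ≠ b) (ha1 : -2 ≤ a) (hb1 : -2 ≤ b)
    (ha3 : a ≠ -1) (hb3 : b ≠ -1)
    (hs1 : -2 ≤ a+b) (hs2 : a+b ≤ S) (hs5 : a+b ≠ -1) (hs6 : a+b ≠ 1)
    (hm : m = S ∨ m = 0 ∨ (m = a + b ∧ ¬(a = -2 ∧ b = 0 ∨ a = 0 ∧ b = -2))) :
    m = 0 ∨ (2 ≤ m ∧ m ≤ S) := by omega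

lemma case_pp (a b x y : ℤ) (h1 : a = -2 ∧ b = 0 ∨ a = 0 ∧ b = -2)
    (h2 : x = -2 ∧ y = 0 ∨ x = 0 ∧ y = -2)
    (hef : ¬(a = x ∧ b = y ∨ a = y ∧ b = x)) : False := by omega

lemma case_qq (S a b x y : ℤ) (h1 : a = 0 ∧ b = S ∨ a = S ∧ b = 0)
    (h2 : x = 0 ∧ y = S ∨ x = S ∧ y = 0)
    (hef : ¬(a = x ∧ b = y ∨ a = y ∧ b = x)) : False := by omega

lemma case_pg (S v x y : ℤ) (h3 : 3 ≤ S) (hv : v = -2 ∨ v = 0) (hvf : v = x ∨ v = y)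
    (hx2 : x ≤ S) (hy2 : y ≤ S)
    (hnq : ¬(x = 0 ∧ y = S ∨ x = S ∧ y = 0)) : x + y ≠ S := by omega

lemma case_qg (S v x y : ℤ) (h3 : 3 ≤ S) (hv : v = 0 ∨ v = S) (hvf : v = x ∨ v = y)
    (hx1 : -2 ≤ x) (hy1 : -2 ≤ y) (hx3 : x ≠ -1) (hy3 : y ≠ -1) (hx4 : x ≠ 1) (hy4 : y ≠ 1)
    (hxy : x ≠ y) (hnp : ¬(x = -2 ∧ y = 0 ∨ x = 0 ∧ y = -2)) : x + y ≠ 0 := by omega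

lemma case_gg (a b x y v : ℤ) (hve : v = a ∨ v = b) (hvf : v = x ∨ v = y)
    (hef : ¬(a = x ∧ b = y ∨ a = y ∧ b = x)) : a + b ≠ x + y := by omega

lemma hv_p (a b v : ℤ) (hve : v = a ∨ v = b)
    (hd : a = -2 ∧ b = 0 ∨ a = 0 ∧ b = -2) : v = -2 ∨ v = 0 := by omega

lemma hv_q (S a b v : ℤ) (hve : v = a ∨ v = b)
    (hd : a = 0 ∧ b = S ∨ a = S ∧ b = 0) : v = 0 ∨ v = S := by omega

lemma sne (S : ℤ) (h : 3 ≤ S) : S ≠ 0 := by omega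

lemma final (s : ℕ) (m1 m2 : ℤ) (h3 : 3 ≤ s)
    (h1 : m1 = 0 ∨ (2 ≤ m1 ∧ m1 ≤ (s:ℤ))) (h2 : m2 = 0 ∨ (2 ≤ m2 ∧ m2 ≤ (s:ℤ)))
    (hne : m1 ≠ m2) :
    ¬(min (m1 - 1).toNat (s - 1) = min (m2 - 1).toNat (s - 1)) := by omega

theorem chromaticIndex_H_2_s_1_1 (s : ℕ) (h3 : 3 ≤ s) (h6 : s ≤ 6) :
    chromaticIndex (HGraph 2 (s : ℤ) 1 1) = s := by
  classical
  have hs3 : (3:ℤ) ≤ (s:ℤ) := by exact_mod_cast h3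
  have hmem : s ∈ {n : ℕ | ∃ c : Sym2 ℤ → Fin n,
      ∀ e ∈ (HGraph 2 (s:ℤ) 1 1).edgeSet, ∀ f ∈ (HGraph 2 (s:ℤ) 1 1).edgeSet,
        e ≠ f → (∃ v, v ∈ e ∧ v ∈ f) → c e ≠ c f} := by
    refine ⟨fun e => ⟨min (msum (s:ℤ) e - 1).toNat (s-1), by omega⟩, ?_⟩
    intro e he f hf hef hv
    induction e using Sym2.ind with | _ a b => ?_
    induction f using Sym2.ind with | _ x y => ?_
    obtain ⟨v, hve, hvf⟩ := hv
    rw [SimpleGraph.mem_edgeSet, HGraph_adj] at he hf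
    obtain ⟨hab, ⟨ha1, ha2⟩, ⟨hb1, hb2⟩, ⟨hs1, hs2⟩, ha3, hb3, ha4, hb4, hs5, hs6⟩ := he
    obtain ⟨hxy, ⟨hx1, hx2⟩, ⟨hy1, hy2⟩, ⟨ht1, ht2⟩, hx3, hy3, hx4, hy4, ht5, ht6⟩ := hf
    rw [Sym2.mem_iff] at hve hvf
    rw [ne_eq, Sym2.eq_iff] at hef
    simp only [ne_eq, Fin.mk.injEq]
    have hm1 : (msum (s:ℤ) s(a,b) = (s:ℤ) ∧ (a = -2 ∧ b = 0 ∨ a = 0 ∧ b = -2)) ∨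
        (msum (s:ℤ) s(a,b) = 0 ∧ (a = 0 ∧ b = (s:ℤ) ∨ a = (s:ℤ) ∧ b = 0)) ∨
        (msum (s:ℤ) s(a,b) = a + b ∧ ¬(a = -2 ∧ b = 0 ∨ a = 0 ∧ b = -2) ∧
          ¬(a = 0 ∧ b = (s:ℤ) ∨ a = (s:ℤ) ∧ b = 0)) := by
      unfold msum
      split_ifs with h1 h2
      · exact Or.inl ⟨rfl, Sym2.eq_iff.mp h1⟩
      · exact Or.inr (Or.inl ⟨rfl, Sym2.eq_iff.mp h2⟩)
      · exact Or.inr (Or.inr ⟨rfl, fun h => h1 (Sym2.eq_iff.mpr h),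
          fun h => h2 (Sym2.eq_iff.mpr h)⟩)
    have hm2 : (msum (s:ℤ) s(x,y) = (s:ℤ) ∧ (x = -2 ∧ y = 0 ∨ x = 0 ∧ y = -2)) ∨
        (msum (s:ℤ) s(x,y) = 0 ∧ (x = 0 ∧ y = (s:ℤ) ∨ x = (s:ℤ) ∧ y = 0)) ∨
        (msum (s:ℤ) s(x,y) = x + y ∧ ¬(x = -2 ∧ y = 0 ∨ x = 0 ∧ y = -2) ∧
          ¬(x = 0 ∧ y = (s:ℤ) ∨ x = (s:ℤ) ∧ y = 0)) := by
      unfold msum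
      split_ifs with h1 h2
      · exact Or.inl ⟨rfl, Sym2.eq_iff.mp h1⟩
      · exact Or.inr (Or.inl ⟨rfl, Sym2.eq_iff.mp h2⟩)
      · exact Or.inr (Or.inr ⟨rfl, fun h => h1 (Sym2.eq_iff.mpr h),
          fun h => h2 (Sym2.eq_iff.mpr h)⟩)
    have hA : msum (s:ℤ) s(a,b) = 0 ∨ (2 ≤ msum (s:ℤ) s(a,b) ∧ msum (s:ℤ) s(a,b) ≤ (s:ℤ)) :=
      mrange (s:ℤ) _ a b hs3 hab ha1 hb1 ha3 hb3 hs1 hs2 hs5 hs6 (by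
        rcases hm1 with ⟨h, _⟩ | ⟨h, _⟩ | ⟨h, hd, _⟩
        exacts [Or.inl h, Or.inr (Or.inl h), Or.inr (Or.inr ⟨h, hd⟩)])
    have hB : msum (s:ℤ) s(x,y) = 0 ∨ (2 ≤ msum (s:ℤ) s(x,y) ∧ msum (s:ℤ) s(x,y) ≤ (s:ℤ)) :=
      mrange (s:ℤ) _ x y hs3 hxy hx1 hy1 hx3 hy3 ht1 ht2 ht5 ht6 (by
        rcases hm2 with ⟨h, _⟩ | ⟨h, _⟩ | ⟨h, hd, _⟩
        exacts [Or.inl h, Or.inr (Or.inl h), Or.inr (Or.inr ⟨h, hd⟩)])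
    refine final s _ _ h3 hA hB ?_
    rcases hm1 with ⟨hm1e, hm1d⟩ | ⟨hm1e, hm1d⟩ | ⟨hm1e, hm1d1, hm1d2⟩ <;>
      rcases hm2 with ⟨hm2e, hm2d⟩ | ⟨hm2e, hm2d⟩ | ⟨hm2e, hm2d1, hm2d2⟩ <;>
      rw [hm1e, hm2e]
    · exact (case_pp a b x y hm1d hm2d hef).elim
    · exact sne (s:ℤ) hs3
    · exact (case_pg (s:ℤ) v x y hs3 (hv_p a b v hve hm1d) hvf hx2 hy2 hm2d2).symm
    · exact (sne (s:ℤ) hs3).symm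
    · exact (case_qq (s:ℤ) a b x y hm1d hm2d hef).elim
    · exact (case_qg (s:ℤ) v x y hs3 (hv_q (s:ℤ) a b v hve hm1d) hvf hx1 hy1
        hx3 hy3 hx4 hy4 hxy hm2d1).symm
    · exact case_pg (s:ℤ) v a b hs3 (hv_p x y v hvf hm2d) hve ha2 hb2 hm1d2
    · exact case_qg (s:ℤ) v a b hs3 (hv_q (s:ℤ) x y v hvf hm2d) hve ha1 hb1
        ha3 hb3 ha4 hb4 hab hm1d1
    · exact case_gg a b x y v hve hvf hef
  apply le_antisymm
  · exact Nat.sInf_le hmem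
  · refine le_csInf ⟨s, hmem⟩ ?_
    rintro n ⟨c, hc⟩
    have adj0 : ∀ t : ℤ, (t = -2 ∨ (2 ≤ t ∧ t ≤ (s:ℤ))) → (HGraph 2 (s:ℤ) 1 1).Adj 0 t := by
      intro t ht
      rw [HGraph_adj]
      omega
    let g : Fin s → ℤ := fun k => if k.val = 0 then -2 else (k.val : ℤ) + 1
    have hgspec : ∀ k : Fin s, g k = -2 ∨ (2 ≤ g k ∧ g k ≤ (s:ℤ)) := by
      intro k
      have hk : (k : ℕ) < s := k.isLt
      have hgk : g k = if k.val = 0 then (-2:ℤ) else (k.val : ℤ) + 1 := rfl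
      rw [hgk]
      split_ifs with h
      · exact Or.inl rfl
      · right
        constructor <;> push_cast <;> omega
    have hadj : ∀ k : Fin s, (HGraph 2 (s:ℤ) 1 1).Adj 0 (g k) := fun k => adj0 _ (hgspec k)
    have hginj : Function.Injective g := by
      intro k l hkl
      have hk : (k : ℕ) < s := k.isLt
      have hl : (l : ℕ) < s := l.isLt
      have hkl' : (if k.val = 0 then (-2:ℤ) else (k.val : ℤ) + 1)
          = (if l.val = 0 then (-2:ℤ) else (l.val : ℤ) + 1) := hkl
      have : (k : ℕ) = (l : ℕ) := by
        split_ifs at hkl' with h1 h2 h2 <;> omega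
      exact Fin.ext this
    have hinj : Function.Injective (fun k : Fin s => c s(0, g k)) := by
      intro k l hkl
      by_contra hne
      have hgne : g k ≠ g l := fun h => hne (hginj h)
      have h0k : (0:ℤ) ≠ g k := ((HGraph_adj _ _ _ _ _ _).mp (hadj k)).1
      have hene : s((0:ℤ), g k) ≠ s((0:ℤ), g l) := by
        rw [ne_eq, Sym2.eq_iff]
        push_neg
        exact ⟨fun _ => hgne, fun _ => h0k.symm⟩
      exact hc _ ((HGraph 2 (s:ℤ) 1 1).mem_edgeSet.mpr (hadj k)) _
        ((HGraph 2 (s:ℤ) 1 1).mem_edgeSet.mpr (hadj l)) hene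
        ⟨0, Sym2.mem_iff.mpr (Or.inl rfl), Sym2.mem_iff.mpr (Or.inl rfl)⟩ hkl
    calc s = Fintype.card (Fin s) := (Fintype.card_fin s).symm
    _ ≤ Fintype.card (Fin n) := Fintype.card_le_of_injective _ hinj
    _ = n := Fintype.card_fin n
end

section
/- For all s ≥ 4, m ∈ {1,2} and j ∈ {1,2,3}, the edge-sum chromatic number of H^{-3,s}_{m,j} equals s+2, which strictly exceeds its chromatic index s+1; hence H^{-3,s}_{m,j} is a non-perfect edge-sum color graph. -/
namespace EdgeSumAux

lemma adj_iff (s m j u v : ℤ) : (HGraph 3 s m j).Adj u v ↔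
    (u ≠ v ∧ (-3 ≤ u ∧ u ≤ s) ∧ (-3 ≤ v ∧ v ≤ s) ∧ (-3 ≤ u + v ∧ u + v ≤ s) ∧
      u ≠ -m ∧ v ≠ -m ∧ u ≠ j ∧ v ≠ j ∧ u + v ≠ -m ∧ u + v ≠ j) := by
  simp [HGraph, Set.mem_Icc]

/-- value of the "zero-edge" coloring at vertex `w`. -/
def fval (s w : ℤ) : ℤ := if w = -3 then s else if w = s then 0 else w

def rawfn (s : ℤ) : ℤ → ℤ → ℤ := fun u v =>
  if u = 0 then fval s v else if v = 0 then fval s u else u + v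

lemma rawfn_symm (s u v : ℤ) : rawfn s u v = rawfn s v u := by
  unfold rawfn
  by_cases hu : u = 0 <;> by_cases hv : v = 0 <;> simp [hu, hv, add_comm]

/-- the integer-valued proper edge coloring. -/
def colZ (s : ℤ) : Sym2 ℤ → ℤ := Sym2.lift ⟨rawfn s, rawfn_symm s⟩

lemma colZ_mk (s a b : ℤ) : colZ s s(a, b) = rawfn s a b := Sym2.lift_mk _ _ _

lemma colZ_mem (s m j : ℤ) (hs : 4 ≤ s) (hm : m = 1 ∨ m = 2) (hj : j = 1 ∨ j = 2 ∨ j = 3)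
    {a b : ℤ} (h : (HGraph 3 s m j).Adj a b) :
    -2 ≤ colZ s s(a, b) ∧ colZ s s(a, b) ≤ s ∧ colZ s s(a, b) ≠ -m ∧ colZ s s(a, b) ≠ j := by
  rw [adj_iff] at h
  obtain ⟨h1, h2, h3, h4, h5, h6, h7, h8, h9, h10⟩ := h
  rw [colZ_mk]
  unfold rawfn fval
  rcases hm with rfl | rfl <;> rcases hj with rfl | rfl | rfl <;> split_ifs <;> omega

lemma colZ_ne (s m j : ℤ) (hs : 4 ≤ s) {a b d : ℤ}
    (hab : (HGraph 3 s m j).Adj a b) (had : (HGraph 3 s m j).Adj a d) (hbd : b ≠ d) :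
    colZ s s(a, b) ≠ colZ s s(a, d) := by
  rw [adj_iff] at hab had
  obtain ⟨h1, h2, h3, h4, h5, h6, h7, h8, h9, h10⟩ := hab
  obtain ⟨g1, g2, g3, g4, g5, g6, g7, g8, g9, g10⟩ := had
  rw [colZ_mk, colZ_mk]
  unfold rawfn fval
  split_ifs <;> omega

/-- compression of the palette `[-2,s] \ {-m, j}` into `Fin (s+1)`. -/
def gfin (s : ℕ) (m j : ℤ) (k : ℤ) : Fin (s + 1) :=
  ⟨(max 0 (min (k + 2 - (if -m < k then 1 else 0) - (if j < k then 1 else 0)) s)).toNat,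
    by omega⟩

lemma gfin_ne (s : ℕ) (m j : ℤ) (hs : 4 ≤ s) (hm : m = 1 ∨ m = 2)
    (hj : j = 1 ∨ j = 2 ∨ j = 3) {k1 k2 : ℤ}
    (h1 : -2 ≤ k1 ∧ k1 ≤ s ∧ k1 ≠ -m ∧ k1 ≠ j)
    (h2 : -2 ≤ k2 ∧ k2 ≤ s ∧ k2 ≠ -m ∧ k2 ≠ j)
    (hne : k1 ≠ k2) : gfin s m j k1 ≠ gfin s m j k2 := by
  unfold gfin
  simp only [Ne, Fin.mk.injEq]
  rcases hm with rfl | rfl <;> rcases hj with rfl | rfl | rfl <;> split_ifs <;> omega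

lemma upper (s : ℕ) (hs : 4 ≤ s) (m j : ℤ) (hm : m = 1 ∨ m = 2)
    (hj : j = 1 ∨ j = 2 ∨ j = 3) :
    (s + 1) ∈ {n : ℕ | ∃ c : Sym2 ℤ → Fin n,
      ∀ e ∈ (HGraph 3 (s : ℤ) m j).edgeSet, ∀ f ∈ (HGraph 3 (s : ℤ) m j).edgeSet,
        e ≠ f → (∃ v, v ∈ e ∧ v ∈ f) → c e ≠ c f} := by
  refine ⟨fun e => gfin s m j (colZ s e), ?_⟩
  rintro e he f hf hef ⟨v, hve, hvf⟩
  obtain ⟨x, rfl⟩ := Sym2.mem_iff_exists.mp hve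
  obtain ⟨y, rfl⟩ := Sym2.mem_iff_exists.mp hvf
  rw [SimpleGraph.mem_edgeSet] at he hf
  have hxy : x ≠ y := fun h => hef (by rw [h])
  have hcs : (4 : ℤ) ≤ (s : ℤ) := by exact_mod_cast hs
  exact gfin_ne s m j hs hm hj (colZ_mem _ m j hcs hm hj he)
    (colZ_mem _ m j hcs hm hj hf) (colZ_ne _ m j hcs he hf hxy)

lemma lower (s : ℕ) (hs : 4 ≤ s) (m j : ℤ) (hm : m = 1 ∨ m = 2)
    (hj : j = 1 ∨ j = 2 ∨ j = 3) :
    ∀ n ∈ {n : ℕ | ∃ c : Sym2 ℤ → Fin n,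
      ∀ e ∈ (HGraph 3 (s : ℤ) m j).edgeSet, ∀ f ∈ (HGraph 3 (s : ℤ) m j).edgeSet,
        e ≠ f → (∃ v, v ∈ e ∧ v ∈ f) → c e ≠ c f}, s + 1 ≤ n := by
  rintro n ⟨c, hc⟩
  classical
  set F : Finset ℤ := (((Finset.Icc (-3 : ℤ) (s : ℤ)).erase (-m)).erase j).erase 0 with hF
  have hmem : ∀ a ∈ F, -3 ≤ a ∧ a ≤ (s : ℤ) ∧ a ≠ -m ∧ a ≠ j ∧ a ≠ 0 := by
    intro a ha
    simp only [hF, Finset.mem_erase, Finset.mem_Icc] at ha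
    tauto
  have hadj : ∀ a ∈ F, (HGraph 3 (s : ℤ) m j).Adj 0 a := by
    intro a ha
    obtain ⟨ha1, ha2, ha3, ha4, ha5⟩ := hmem a ha
    rw [adj_iff]
    rcases hm with rfl | rfl <;> rcases hj with rfl | rfl | rfl <;> omega
  have hcard : F.card = s + 1 := by
    have h0 : (Finset.Icc (-3 : ℤ) (s : ℤ)).card = s + 4 := by
      rw [Int.card_Icc]; omega
    have hm1 : -m ∈ Finset.Icc (-3 : ℤ) (s : ℤ) := by
      simp only [Finset.mem_Icc]; omega
    have hm2 : j ∈ (Finset.Icc (-3 : ℤ) (s : ℤ)).erase (-m) := by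
      simp only [Finset.mem_erase, Finset.mem_Icc]
      rcases hm with rfl | rfl <;> rcases hj with rfl | rfl | rfl <;> omega
    have hm3 : (0 : ℤ) ∈ ((Finset.Icc (-3 : ℤ) (s : ℤ)).erase (-m)).erase j := by
      simp only [Finset.mem_erase, Finset.mem_Icc]
      rcases hm with rfl | rfl <;> rcases hj with rfl | rfl | rfl <;> omega
    rw [hF, Finset.card_erase_of_mem hm3, Finset.card_erase_of_mem hm2,
      Finset.card_erase_of_mem hm1, h0]
    omega
  have hinj : Set.InjOn (fun w => c s(0, w)) ↑F := by
    intro a1 ha1 a2 ha2 heq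
    by_contra hne
    have he1 : s(0, a1) ∈ (HGraph 3 (s : ℤ) m j).edgeSet :=
      (SimpleGraph.mem_edgeSet _).mpr (hadj a1 ha1)
    have he2 : s(0, a2) ∈ (HGraph 3 (s : ℤ) m j).edgeSet :=
      (SimpleGraph.mem_edgeSet _).mpr (hadj a2 ha2)
    have hef : s(0, a1) ≠ s(0, a2) := by
      intro hEq
      rw [Sym2.eq_iff] at hEq
      obtain ⟨b1, b2, b3, b4, b5⟩ := hmem a2 ha2
      rcases hEq with ⟨-, h⟩ | ⟨h1, h2⟩
      · exact hne h
      · exact b5 h1.symm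
    exact hc _ he1 _ he2 hef ⟨0, by simp, by simp⟩ heq
  have hle := Finset.card_le_card_of_injOn (fun w => c s(0, w))
    (fun a _ => Finset.mem_univ _) hinj
  rw [hcard] at hle
  simpa using hle

lemma chromIdx (s : ℕ) (hs : 4 ≤ s) (m j : ℤ) (hm : m = 1 ∨ m = 2)
    (hj : j = 1 ∨ j = 2 ∨ j = 3) :
    chromaticIndex (HGraph 3 (s : ℤ) m j) = s + 1 := by
  unfold chromaticIndex
  have h1 := upper s hs m j hm hj
  have h2 := lower s hs m j hm hj
  exact le_antisymm (Nat.sInf_le h1) (h2 _ (Nat.sInf_mem ⟨_, h1⟩))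

lemma classes_eq (s : ℕ) (hs : 4 ≤ s) (m j : ℤ) (hm : m = 1 ∨ m = 2)
    (hj : j = 1 ∨ j = 2 ∨ j = 3) :
    {k : ℤ | ∃ e ∈ (HGraph 3 (s : ℤ) m j).edgeSet, edgeSum e = k} =
      ↑(((Finset.Icc (-3 : ℤ) (s : ℤ)).erase (-m)).erase j) := by
  ext k
  simp only [Set.mem_setOf_eq, Finset.mem_coe, Finset.mem_erase, Finset.mem_Icc]
  constructor
  · rintro ⟨e, he, rfl⟩
    induction e using Sym2.ind with
    | _ a b =>
      rw [SimpleGraph.mem_edgeSet, adj_iff] at he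
      simp only [edgeSum, Sym2.lift_mk]
      obtain ⟨h1, h2, h3, h4, h5, h6, h7, h8, h9, h10⟩ := he
      exact ⟨h10, h9, h4.1, h4.2⟩
  · rintro ⟨hkj, hkm, hk1, hk2⟩
    by_cases hk0 : k = 0
    · subst hk0
      rcases hj with rfl | rfl | rfl
      · exact ⟨s(-3, 3), (SimpleGraph.mem_edgeSet _).mpr ((adj_iff _ _ _ _ _).mpr
          (by rcases hm with rfl | rfl <;> omega)), by simp [edgeSum]⟩
      · exact ⟨s(-3, 3), (SimpleGraph.mem_edgeSet _).mpr ((adj_iff _ _ _ _ _).mpr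
          (by rcases hm with rfl | rfl <;> omega)), by simp [edgeSum]⟩
      · rcases hm with rfl | rfl
        · exact ⟨s(-2, 2), (SimpleGraph.mem_edgeSet _).mpr ((adj_iff _ _ _ _ _).mpr
            (by omega)), by simp [edgeSum]⟩
        · exact ⟨s(-1, 1), (SimpleGraph.mem_edgeSet _).mpr ((adj_iff _ _ _ _ _).mpr
            (by omega)), by simp [edgeSum]⟩
    · exact ⟨s(0, k), (SimpleGraph.mem_edgeSet _).mpr ((adj_iff _ _ _ _ _).mpr
        (by rcases hm with rfl | rfl <;> omega)), by simp [edgeSum]⟩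

lemma esc (s : ℕ) (hs : 4 ≤ s) (m j : ℤ) (hm : m = 1 ∨ m = 2)
    (hj : j = 1 ∨ j = 2 ∨ j = 3) :
    edgeSumChromatic (HGraph 3 (s : ℤ) m j) = s + 2 := by
  unfold edgeSumChromatic
  rw [classes_eq s hs m j hm hj, Set.ncard_coe_finset]
  have h0 : (Finset.Icc (-3 : ℤ) (s : ℤ)).card = s + 4 := by
    rw [Int.card_Icc]; omega
  have hm1 : -m ∈ Finset.Icc (-3 : ℤ) (s : ℤ) := by
    simp only [Finset.mem_Icc]
    rcases hm with rfl | rfl <;> omega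
  have hm2 : j ∈ (Finset.Icc (-3 : ℤ) (s : ℤ)).erase (-m) := by
    simp only [Finset.mem_erase, Finset.mem_Icc]
    rcases hm with rfl | rfl <;> rcases hj with rfl | rfl | rfl <;> omega
  rw [Finset.card_erase_of_mem hm2, Finset.card_erase_of_mem hm1, h0]
  omega

end EdgeSumAux

theorem edgeSumChromatic_H_3_s_m_j (s : ℕ) (hs : 4 ≤ s) (m j : ℤ)
    (hm : m ∈ ({1, 2} : Set ℤ)) (hj : j ∈ ({1, 2, 3} : Set ℤ)) :
    edgeSumChromatic (HGraph 3 (s : ℤ) m j) = s + 2 ∧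
    chromaticIndex (HGraph 3 (s : ℤ) m j) = s + 1 ∧
    chromaticIndex (HGraph 3 (s : ℤ) m j) < edgeSumChromatic (HGraph 3 (s : ℤ) m j) := by
  have hm' : m = 1 ∨ m = 2 := by simpa using hm
  have hj' : j = 1 ∨ j = 2 ∨ j = 3 := by simpa using hj
  have hA := EdgeSumAux.esc s hs m j hm' hj'
  have hB := EdgeSumAux.chromIdx s hs m j hm' hj'
  exact ⟨hA, hB, by rw [hA, hB]; omega⟩
end

section
/- For all i ≥ 4, m ∈ {1,2,3} and j ∈ {1,2}, the edge-sum chromatic number of H^{-i,3}_{m,j} equals i+2, which strictly exceeds its chromatic index i+1; hence H^{-i,3}_{m,j} is a non-perfect edge-sum color graph. -/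
/-- Packing map for colors. -/
def psiC (i m j k : ℤ) : ℤ :=
  k + i - (if -m < k then 1 else 0) - (if j < k then 1 else 0)

/-- Folding map: merges the edge-sum `3` with the edge-sum `-i`. -/
def foldC (i k : ℤ) : ℤ := if k = 3 then -i else k

lemma hgraph_adj (i m j a b : ℤ) (h1 : a ≠ b) (h2 : -i ≤ a) (h3 : a ≤ 3)
    (h4 : -i ≤ b) (h5 : b ≤ 3) (h6 : -i ≤ a + b) (h7 : a + b ≤ 3)
    (h8 : a ≠ -m) (h9 : b ≠ -m) (h10 : a ≠ j) (h11 : b ≠ j)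
    (h12 : a + b ≠ -m) (h13 : a + b ≠ j) : (HGraph i 3 m j).Adj a b :=
  ⟨h1, Set.mem_Icc.mpr ⟨h2, h3⟩, Set.mem_Icc.mpr ⟨h4, h5⟩, Set.mem_Icc.mpr ⟨h6, h7⟩,
    h8, h9, h10, h11, h12, h13⟩

lemma hgraph_adj_elim {i m j a b : ℤ} (h : (HGraph i 3 m j).Adj a b) :
    a ≠ b ∧ -i ≤ a ∧ a ≤ 3 ∧ -i ≤ b ∧ b ≤ 3 ∧ -i ≤ a + b ∧ a + b ≤ 3 ∧
    a ≠ -m ∧ b ≠ -m ∧ a ≠ j ∧ b ≠ j ∧ a + b ≠ -m ∧ a + b ≠ j := by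
  obtain ⟨h1, h2, h3, h4, h5, h6, h7, h8, h9, h10⟩ := h
  rw [Set.mem_Icc] at h2 h3 h4
  exact ⟨h1, h2.1, h2.2, h3.1, h3.2, h4.1, h4.2, h5, h6, h7, h8, h9, h10⟩

theorem edgeSumChromatic_H_i_3_m_j (i : ℕ) (hi : 4 ≤ i) (m j : ℤ)
    (hm : m ∈ ({1, 2, 3} : Set ℤ)) (hj : j ∈ ({1, 2} : Set ℤ)) :
    edgeSumChromatic (HGraph (i : ℤ) 3 m j) = i + 2 ∧
    chromaticIndex (HGraph (i : ℤ) 3 m j) = i + 1 ∧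
    chromaticIndex (HGraph (i : ℤ) 3 m j) < edgeSumChromatic (HGraph (i : ℤ) 3 m j) := by
  simp only [Set.mem_insert_iff, Set.mem_singleton_iff] at hm hj
  have hiz : (4 : ℤ) ≤ (i : ℤ) := by exact_mod_cast hi
  have hm' : 1 ≤ m ∧ m ≤ 3 := by rcases hm with rfl | rfl | rfl <;> omega
  have hj' : 1 ≤ j ∧ j ≤ 2 := by rcases hj with rfl | rfl <;> omega
  clear hm hj hi
  -- Part 1 : edge-sum chromatic number
  have hsetA : {k : ℤ | ∃ e ∈ (HGraph (i : ℤ) 3 m j).edgeSet, edgeSum e = k} =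
      ↑(Finset.Icc (-(i : ℤ)) 3 \ {-m, j}) := by
    ext k
    simp only [Set.mem_setOf_eq, Finset.coe_sdiff, Set.mem_diff, Finset.coe_Icc,
      Set.mem_Icc, Finset.coe_insert, Finset.coe_singleton, Set.mem_insert_iff,
      Set.mem_singleton_iff]
    constructor
    · rintro ⟨e, he, rfl⟩
      induction e using Sym2.ind with
      | _ a b =>
        rw [SimpleGraph.mem_edgeSet] at he
        obtain ⟨_, _, _, _, _, _, h7, _, _, _, _, h12, h13⟩ := hgraph_adj_elim he
        simp only [edgeSum, Sym2.lift_mk]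
        constructor
        · omega
        · intro hc
          rcases hc with hc | hc <;> omega
    · rintro ⟨⟨hk1, hk2⟩, hk3⟩
      by_cases hk0 : k = 0
      · subst hk0
        set a : ℤ := if m = 3 then 3 - j else 3 with ha
        have hav : 1 ≤ a ∧ a ≤ 3 ∧ a ≠ m ∧ a ≠ j := by
          rw [ha]; split_ifs with h <;> omega
        refine ⟨s(a, -a), ?_, ?_⟩
        · rw [SimpleGraph.mem_edgeSet]
          apply hgraph_adj <;> omega
        · simp only [edgeSum, Sym2.lift_mk]; omega
      · refine ⟨s(0, k), ?_, ?_⟩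
        · rw [SimpleGraph.mem_edgeSet]
          apply hgraph_adj <;> omega
        · simp only [edgeSum, Sym2.lift_mk]; omega
  have hpart1 : edgeSumChromatic (HGraph (i : ℤ) 3 m j) = i + 2 := by
    rw [edgeSumChromatic, hsetA, Set.ncard_coe_finset, Finset.card_sdiff_of_subset]
    · rw [Int.card_Icc]
      have h2 : ({-m, j} : Finset ℤ).card = 2 := by
        rw [Finset.card_insert_of_notMem, Finset.card_singleton]
        simp only [Finset.mem_singleton]
        omega
      rw [h2]
      omega
    · intro x hx
      simp only [Finset.mem_insert, Finset.mem_singleton] at hx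
      simp only [Finset.mem_Icc]
      rcases hx with rfl | rfl <;> omega
  have hpart2 : chromaticIndex (HGraph (i : ℤ) 3 m j) = i + 1 := by
    -- Part 2 : chromatic index
    -- auxiliary facts about psiC
    have hpsiB : ∀ k : ℤ, -(i : ℤ) ≤ k → k ≤ 2 → k ≠ -m → k ≠ j →
        0 ≤ psiC i m j k ∧ psiC i m j k ≤ i := by
      intro k h1 h2 h3 h4
      unfold psiC
      split_ifs <;> omega
    have hpsiInj : ∀ k l : ℤ, -(i : ℤ) ≤ k → k ≤ 2 → k ≠ -m → k ≠ j →
        -(i : ℤ) ≤ l → l ≤ 2 → l ≠ -m → l ≠ j →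
        psiC i m j k = psiC i m j l → k = l := by
      intro k l h1 h2 h3 h4 h5 h6 h7 h8 h9
      unfold psiC at h9
      split_ifs at h9 <;> omega
    have hfoldDom : ∀ k : ℤ, -(i : ℤ) ≤ k → k ≤ 3 → k ≠ -m → k ≠ j →
        -(i : ℤ) ≤ foldC i k ∧ foldC i k ≤ 2 ∧ foldC i k ≠ -m ∧ foldC i k ≠ j := by
      intro k h1 h2 h3 h4
      unfold foldC
      split_ifs <;> omega
    set gval : Sym2 ℤ → ℤ := fun e =>
      if e = s((0 : ℤ), -(i : ℤ)) then psiC i m j 0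
      else psiC i m j (foldC i (edgeSum e)) with hgval
    have hgBound : ∀ e ∈ (HGraph (i : ℤ) 3 m j).edgeSet, 0 ≤ gval e ∧ gval e ≤ i := by
      intro e he
      induction e using Sym2.ind with
      | _ a b =>
        rw [SimpleGraph.mem_edgeSet] at he
        obtain ⟨_, _, _, _, _, h6, h7, _, _, _, _, h12, h13⟩ := hgraph_adj_elim he
        rw [hgval]
        simp only [edgeSum, Sym2.lift_mk]
        split_ifs with h
        · exact hpsiB 0 (by omega) (by omega) (by omega) (by omega)
        · obtain ⟨d1, d2, d3, d4⟩ := hfoldDom (a + b) h6 h7 h12 h13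
          exact hpsiB _ d1 d2 d3 d4
    have hne : (i : ℕ) + 1 ∈ {n : ℕ | ∃ c : Sym2 ℤ → Fin n,
        ∀ e ∈ (HGraph (i : ℤ) 3 m j).edgeSet, ∀ f ∈ (HGraph (i : ℤ) 3 m j).edgeSet,
          e ≠ f → (∃ v, v ∈ e ∧ v ∈ f) → c e ≠ c f} := by
      refine ⟨fun e => ⟨(gval e).toNat % (i + 1), Nat.mod_lt _ (Nat.succ_pos i)⟩, ?_⟩
      intro e he f hf hef ⟨x, hxe, hxf⟩ hcc
      obtain ⟨v, rfl⟩ := Sym2.mem_iff_exists.mp hxe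
      obtain ⟨w, rfl⟩ := Sym2.mem_iff_exists.mp hxf
      rw [SimpleGraph.mem_edgeSet] at he hf
      obtain ⟨e1, e2, e3, e4, e5, e6, e7, e8, e9, e10, e11, e12, e13⟩ := hgraph_adj_elim he
      obtain ⟨f1, f2, f3, f4, f5, f6, f7, f8, f9, f10, f11, f12, f13⟩ := hgraph_adj_elim hf
      have hvw : v ≠ w := by rintro rfl; exact hef rfl
      have hmod : (gval s(x, v)).toNat % (i + 1) = (gval s(x, w)).toNat % (i + 1) := by
        exact congrArg Fin.val hcc
      have hb1 := hgBound s(x, v) ((SimpleGraph.mem_edgeSet _).mpr he)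
      have hb2 := hgBound s(x, w) ((SimpleGraph.mem_edgeSet _).mpr hf)
      rw [Nat.mod_eq_of_lt (by omega), Nat.mod_eq_of_lt (by omega)] at hmod
      have geq : gval s(x, v) = gval s(x, w) := by omega
      rw [hgval] at geq
      simp only [edgeSum, Sym2.lift_mk] at geq
      split_ifs at geq with h1 h2 h2
      · exact hef (h1.trans h2.symm)
      · -- e is the special edge, f is not
        obtain ⟨d1, d2, d3, d4⟩ := hfoldDom (x + w) f6 f7 f12 f13
        have h0 : (0 : ℤ) = foldC i (x + w) :=
          hpsiInj 0 _ (by omega) (by omega) (by omega) (by omega) d1 d2 d3 d4 geq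
        have hx0 : x = 0 ∨ x = -(i : ℤ) := by
          have hxmem : x ∈ s(x, v) := Sym2.mem_mk_left x v
          rw [h1] at hxmem
          exact Sym2.mem_iff.mp hxmem
        unfold foldC at h0
        split_ifs at h0 <;> rcases hx0 with rfl | rfl <;> omega
      · -- f is the special edge, e is not
        obtain ⟨d1, d2, d3, d4⟩ := hfoldDom (x + v) e6 e7 e12 e13
        have h0 : foldC i (x + v) = 0 :=
          hpsiInj _ 0 d1 d2 d3 d4 (by omega) (by omega) (by omega) (by omega) geq
        have hx0 : x = 0 ∨ x = -(i : ℤ) := by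
          have hxmem : x ∈ s(x, w) := Sym2.mem_mk_left x w
          rw [h2] at hxmem
          exact Sym2.mem_iff.mp hxmem
        unfold foldC at h0
        split_ifs at h0 <;> rcases hx0 with rfl | rfl <;> omega
      · -- neither is special
        obtain ⟨d1, d2, d3, d4⟩ := hfoldDom (x + v) e6 e7 e12 e13
        obtain ⟨c1, c2, c3, c4⟩ := hfoldDom (x + w) f6 f7 f12 f13
        have hff : foldC i (x + v) = foldC i (x + w) :=
          hpsiInj _ _ d1 d2 d3 d4 c1 c2 c3 c4 geq
        unfold foldC at hff
        split_ifs at hff with g1 g2 g2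
        · omega
        · -- x + v = 3, x + w = -i ⇒ x = 0, w = -i : f would be special
          have hx0 : x = 0 := by omega
          have hwi : w = -(i : ℤ) := by omega
          exact h2 (by rw [hx0, hwi])
        · have hx0 : x = 0 := by omega
          have hvi : v = -(i : ℤ) := by omega
          exact h1 (by rw [hx0, hvi])
        · omega
    have hlow : ∀ n ∈ {n : ℕ | ∃ c : Sym2 ℤ → Fin n,
        ∀ e ∈ (HGraph (i : ℤ) 3 m j).edgeSet, ∀ f ∈ (HGraph (i : ℤ) 3 m j).edgeSet,
          e ≠ f → (∃ v, v ∈ e ∧ v ∈ f) → c e ≠ c f}, i + 1 ≤ n := by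
      rintro n ⟨c, hc⟩
      set F : Finset ℤ := Finset.Icc (-(i : ℤ)) 3 \ {0, -m, j} with hF
      have hFcard : F.card = i + 1 := by
        rw [hF, Finset.card_sdiff_of_subset]
        · rw [Int.card_Icc]
          have h3 : ({0, -m, j} : Finset ℤ).card = 3 := by
            rw [Finset.card_insert_of_notMem, Finset.card_insert_of_notMem,
              Finset.card_singleton]
            · simp only [Finset.mem_singleton]; omega
            · simp only [Finset.mem_insert, Finset.mem_singleton]; push_neg
              constructor <;> omega
          rw [h3]; omega
        · intro x hx
          simp only [Finset.mem_insert, Finset.mem_singleton] at hx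
          simp only [Finset.mem_Icc]
          rcases hx with rfl | rfl | rfl <;> omega
      have hinj : Set.InjOn (fun v => c s(0, v)) F := by
        intro v hv w hw h
        simp only [hF, Finset.coe_sdiff, Set.mem_diff, Finset.coe_Icc, Set.mem_Icc,
          Finset.coe_insert, Finset.coe_singleton, Set.mem_insert_iff,
          Set.mem_singleton_iff, not_or] at hv hw
        by_contra hne
        have hev : s((0 : ℤ), v) ∈ (HGraph (i : ℤ) 3 m j).edgeSet := by
          rw [SimpleGraph.mem_edgeSet]; apply hgraph_adj <;> omega
        have hew : s((0 : ℤ), w) ∈ (HGraph (i : ℤ) 3 m j).edgeSet := by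
          rw [SimpleGraph.mem_edgeSet]; apply hgraph_adj <;> omega
        have hne' : s((0 : ℤ), v) ≠ s((0 : ℤ), w) := by
          intro hh
          rcases Sym2.mem_iff.mp (hh ▸ Sym2.mem_mk_right (0 : ℤ) v) with h' | h'
          · exact hv.2.1 h'
          · exact hne h'
        exact hc _ hev _ hew hne' ⟨0, Sym2.mem_mk_left 0 v, Sym2.mem_mk_left 0 w⟩ h
      have hcard : F.card ≤ n := by
        calc F.card ≤ (Finset.univ : Finset (Fin n)).card :=
              Finset.card_le_card_of_injOn _ (fun a _ => Finset.mem_univ _) hinj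
          _ = n := by rw [Finset.card_univ, Fintype.card_fin]
      omega
    exact le_antisymm (Nat.sInf_le hne) (hlow _ (Nat.sInf_mem ⟨i + 1, hne⟩))
  exact ⟨hpart1, hpart2, by rw [hpart1, hpart2]; omega⟩
end

section
/- The edge-sum chromatic number of H^{-4,3}_{1,2} is 6 and its chromatic index is 5; in particular H^{-4,3}_{1,2} is a non-perfect edge-sum color graph. -/
lemma edgeSet_eq : (HGraph 4 3 1 2).edgeSet =
    {s(-4,0), s(-4,1), s(-3,0), s(-3,1), s(-3,3), s(-2,0), s(-2,3), s(0,1), s(0,3)} := by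
  ext e
  induction e using Sym2.ind with
  | _ u v =>
    simp only [SimpleGraph.mem_edgeSet, HGraph, Set.mem_Icc, Set.mem_insert_iff,
      Set.mem_singleton_iff, Sym2.eq_iff]
    constructor
    · rintro ⟨h1, ⟨h2, h3⟩, ⟨h4, h5⟩, ⟨h6a, h6b⟩, h7, h8, h9, h10, h11, h12⟩
      interval_cases u <;> interval_cases v <;> first | (exfalso; omega) | norm_num
    · intro h
      refine ⟨?_, ?_, ?_, ?_, ?_, ?_, ?_, ?_, ?_, ?_⟩ <;> omega

/-- color as a function of endpoint sum and product -/
def F (s p : ℤ) : Fin 5 :=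
  if s = -4 then 0 else if s = -3 then (if p = -4 then 4 else 1) else if s = -2 then 2
  else if s = 0 then 3 else if s = 1 then (if p = 0 then 3 else 0) else 4

/-- the explicit 5-edge-coloring -/
def myc : Sym2 ℤ → Fin 5 :=
  Sym2.lift ⟨fun a b => F (a + b) (a * b), fun a b => by simp [add_comm, mul_comm]⟩

lemma sumset_eq : {k : ℤ | ∃ e ∈ (HGraph 4 3 1 2).edgeSet, edgeSum e = k} =
    (↑({-4,-3,-2,0,1,3} : Finset ℤ) : Set ℤ) := by
  ext k
  rw [edgeSet_eq]
  simp only [Set.mem_setOf_eq, Set.mem_insert_iff, Set.mem_singleton_iff,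
    Finset.coe_insert, Finset.coe_singleton, exists_eq_or_imp, exists_eq_left,
    edgeSum, Sym2.lift_mk]
  norm_num
  omega

lemma escn : edgeSumChromatic (HGraph 4 3 1 2) = 6 := by
  rw [edgeSumChromatic, sumset_eq, Set.ncard_coe_finset]
  decide

lemma upper : 5 ∈ {n : ℕ | ∃ c : Sym2 ℤ → Fin n,
    ∀ e ∈ (HGraph 4 3 1 2).edgeSet, ∀ f ∈ (HGraph 4 3 1 2).edgeSet,
      e ≠ f → (∃ v, v ∈ e ∧ v ∈ f) → c e ≠ c f} := by
  refine ⟨myc, ?_⟩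
  intro e he f hf hne hsh
  rw [edgeSet_eq] at he hf
  simp only [Set.mem_insert_iff, Set.mem_singleton_iff] at he hf
  rcases he with rfl|rfl|rfl|rfl|rfl|rfl|rfl|rfl|rfl <;>
    rcases hf with rfl|rfl|rfl|rfl|rfl|rfl|rfl|rfl|rfl <;>
    first
      | exact absurd rfl hne
      | (obtain ⟨v, hv1, hv2⟩ := hsh
         simp only [Sym2.mem_iff] at hv1 hv2; omega)
      | (simp only [myc, Sym2.lift_mk]; decide)

lemma lower : ∀ n ∈ {n : ℕ | ∃ c : Sym2 ℤ → Fin n,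
    ∀ e ∈ (HGraph 4 3 1 2).edgeSet, ∀ f ∈ (HGraph 4 3 1 2).edgeSet,
      e ≠ f → (∃ v, v ∈ e ∧ v ∈ f) → c e ≠ c f}, 5 ≤ n := by
  rintro n ⟨c, hc⟩
  have mem1 : s((-4:ℤ),0) ∈ (HGraph 4 3 1 2).edgeSet := by rw [edgeSet_eq]; simp [Sym2.eq_iff]
  have mem2 : s((-3:ℤ),0) ∈ (HGraph 4 3 1 2).edgeSet := by rw [edgeSet_eq]; simp [Sym2.eq_iff]
  have mem3 : s((-2:ℤ),0) ∈ (HGraph 4 3 1 2).edgeSet := by rw [edgeSet_eq]; simp [Sym2.eq_iff]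
  have mem4 : s((0:ℤ),1) ∈ (HGraph 4 3 1 2).edgeSet := by rw [edgeSet_eq]; simp [Sym2.eq_iff]
  have mem5 : s((0:ℤ),3) ∈ (HGraph 4 3 1 2).edgeSet := by rw [edgeSet_eq]; simp [Sym2.eq_iff]
  have d12 : c s(-4,0) ≠ c s(-3,0) :=
    hc _ mem1 _ mem2 (by simp [Sym2.eq_iff]) ⟨0, by simp, by simp⟩
  have d13 : c s(-4,0) ≠ c s(-2,0) :=
    hc _ mem1 _ mem3 (by simp [Sym2.eq_iff]) ⟨0, by simp, by simp⟩
  have d14 : c s(-4,0) ≠ c s(0,1) :=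
    hc _ mem1 _ mem4 (by simp [Sym2.eq_iff]) ⟨0, by simp, by simp⟩
  have d15 : c s(-4,0) ≠ c s(0,3) :=
    hc _ mem1 _ mem5 (by simp [Sym2.eq_iff]) ⟨0, by simp, by simp⟩
  have d23 : c s(-3,0) ≠ c s(-2,0) :=
    hc _ mem2 _ mem3 (by simp [Sym2.eq_iff]) ⟨0, by simp, by simp⟩
  have d24 : c s(-3,0) ≠ c s(0,1) :=
    hc _ mem2 _ mem4 (by simp [Sym2.eq_iff]) ⟨0, by simp, by simp⟩
  have d25 : c s(-3,0) ≠ c s(0,3) :=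
    hc _ mem2 _ mem5 (by simp [Sym2.eq_iff]) ⟨0, by simp, by simp⟩
  have d34 : c s(-2,0) ≠ c s(0,1) :=
    hc _ mem3 _ mem4 (by simp [Sym2.eq_iff]) ⟨0, by simp, by simp⟩
  have d35 : c s(-2,0) ≠ c s(0,3) :=
    hc _ mem3 _ mem5 (by simp [Sym2.eq_iff]) ⟨0, by simp, by simp⟩
  have d45 : c s(0,1) ≠ c s(0,3) :=
    hc _ mem4 _ mem5 (by simp [Sym2.eq_iff]) ⟨0, by simp, by simp⟩
  have h5 : ({c s(-4,0), c s(-3,0), c s(-2,0), c s(0,1), c s(0,3)} :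
      Finset (Fin n)).card = 5 := by
    rw [Finset.card_insert_of_notMem (by simp [d12, d13, d14, d15]),
        Finset.card_insert_of_notMem (by simp [d23, d24, d25]),
        Finset.card_insert_of_notMem (by simp [d34, d35]),
        Finset.card_insert_of_notMem (by simp [d45]),
        Finset.card_singleton]
  have hle := Finset.card_le_univ
    ({c s(-4,0), c s(-3,0), c s(-2,0), c s(0,1), c s(0,3)} : Finset (Fin n))
  rw [h5] at hle
  simpa using hle

lemma chi : chromaticIndex (HGraph 4 3 1 2) = 5 :=
  le_antisymm (Nat.sInf_le upper) (le_csInf ⟨5, upper⟩ lower)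

theorem H_4_3_1_2_nonperfect :
    edgeSumChromatic (HGraph 4 3 1 2) = 6 ∧ chromaticIndex (HGraph 4 3 1 2) = 5 ∧
    chromaticIndex (HGraph 4 3 1 2) ≠ edgeSumChromatic (HGraph 4 3 1 2) := by
  refine ⟨escn, chi, ?_⟩
  rw [escn, chi]; omega
end
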